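/- Let k be a positive integer and let 𝕋 be the infinite k-star with origin 0. Define π(u,v) := dist(x,x') − y − y' for u = (x,y), v = (x',y') ∈ 𝕋 × ℝ. Then for all u, v, u', v' ∈ 𝔾: (1) π(u,v) ∈ ℤ; (2) π((u+u')/2, (v+v')/2) ∈ (1/2)ℤ and π(u,v) + π(u',v') ≥ 2·π((u+u')/2, (v+v')/2), where (u+u')/2 denotes the componentwise midpoint in 𝕋 × ℝ. -/

import Mathlib

open Finset

/-- Representatives of points of the infinite `k`-star: a nonnegative radius and a
branch index. -/
abbrev StarRep (k : ℕ) : Type := {r : ℝ // 0 ≤ r} × Fin k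

/-- Two representatives are identified iff they are equal or both have radius `0`. -/
def starRel (k : ℕ) (p q : StarRep k) : Prop := p = q ∨ (p.1.1 = 0 ∧ q.1.1 = 0)

/-- The setoid identifying all points of radius `0` (the origin). -/
def starSetoid (k : ℕ) : Setoid (StarRep k) where
  r := starRel k
  iseqv := by
    constructor
    · intro p; left; rfl
    · rintro p q (rfl | ⟨h1, h2⟩)
      · left; rfl
      · right; exact ⟨h2, h1⟩
    · rintro p q r (rfl | ⟨h1, h2⟩) (rfl | ⟨h3, h4⟩)
      · left; rfl
      · right; exact ⟨h3, h4⟩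
      · right; exact ⟨h1, h2⟩
      · right; exact ⟨h1, h4⟩

/-- The infinite `k`-star `𝕋`: `k` half-lines glued at a common origin. -/
def TStar (k : ℕ) : Type := Quotient (starSetoid k)

/-- Distance on representatives. -/
noncomputable def starDistFun (k : ℕ) (p q : StarRep k) : ℝ :=
  if p.2 = q.2 then |p.1.1 - q.1.1| else p.1.1 + q.1.1

theorem starDistFun_zero_right (k : ℕ) (p q : StarRep k) (h : q.1.1 = 0) :
    starDistFun k p q = p.1.1 := by
  unfold starDistFun; rw [h]
  split <;> simp [abs_of_nonneg p.1.2]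

theorem starDistFun_zero_left (k : ℕ) (p q : StarRep k) (h : p.1.1 = 0) :
    starDistFun k p q = q.1.1 := by
  unfold starDistFun; rw [h]
  split <;> simp [abs_of_nonneg q.1.2, abs_sub_comm]

/-- The metric `dist` of the infinite `k`-star. -/
noncomputable def starDist (k : ℕ) : TStar k → TStar k → ℝ :=
  Quotient.lift₂ (starDistFun k) (by
    rintro p q p' q' (rfl | ⟨h1, h2⟩) (rfl | ⟨h3, h4⟩)
    · rfl
    · rw [starDistFun_zero_right k p q h3, starDistFun_zero_right k p q' h4]
    · rw [starDistFun_zero_left k p q h1, starDistFun_zero_left k p' q h2]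
    · rw [starDistFun_zero_right k p q h3, starDistFun_zero_right k p' q' h4, h1, h2])

/-- The distance from the origin (the radius). -/
noncomputable def starRad (k : ℕ) : TStar k → ℝ :=
  Quotient.lift (fun p : StarRep k => p.1.1) (by
    rintro p q (rfl | ⟨h1, h2⟩) <;> simp_all)

/-- The point at distance `r ≥ 0` on the `s`-th branch. -/
def starPt (k : ℕ) (r : ℝ) (hr : 0 ≤ r) (s : Fin k) : TStar k :=
  Quotient.mk (starSetoid k) (⟨r, hr⟩, s)

/-- A real is an integer. -/
def IsIntegralReal (r : ℝ) : Prop := ∃ z : ℤ, r = (z : ℝ)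

/-- A real lies in `ℤ + 1/2`. -/
def IsHalfIntegralOdd (r : ℝ) : Prop := ∃ z : ℤ, r = (z : ℝ) + 1 / 2

/-- The grid `𝔾 ⊆ 𝕋 × ℝ`: both coordinates integral, or both proper half-integral. -/
def StarGrid (k : ℕ) : Set (TStar k × ℝ) :=
  {p | (IsIntegralReal (starRad k p.1) ∧ IsIntegralReal p.2) ∨
    (IsHalfIntegralOdd (starRad k p.1) ∧ IsHalfIntegralOdd p.2)}

/-- Midpoint on representatives: on a common branch the usual midpoint; on different
branches, the point halfway along the geodesic through the origin. -/
noncomputable def midRep (k : ℕ) (p q : StarRep k) : StarRep k :=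
  if p.2 = q.2 then (⟨(p.1.1 + q.1.1) / 2, div_nonneg (add_nonneg p.1.2 q.1.2) (by norm_num)⟩, p.2)
  else if h : q.1.1 ≤ p.1.1 then
    (⟨(p.1.1 - q.1.1) / 2, div_nonneg (sub_nonneg.2 h) (by norm_num)⟩, p.2)
  else (⟨(q.1.1 - p.1.1) / 2, div_nonneg (sub_nonneg.2 (le_of_not_ge h)) (by norm_num)⟩, q.2)

theorem midRep_zero_right (k : ℕ) (p q : StarRep k) (h : q.1.1 = 0) :
    midRep k p q = (⟨p.1.1 / 2, div_nonneg p.1.2 (by norm_num)⟩, p.2) := by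
  unfold midRep
  split_ifs with h1 h2
  · simp only [Prod.mk.injEq]
    exact ⟨Subtype.ext (show (p.1.1 + q.1.1) / 2 = p.1.1 / 2 by rw [h]; ring), trivial⟩
  · simp only [Prod.mk.injEq]
    exact ⟨Subtype.ext (show (p.1.1 - q.1.1) / 2 = p.1.1 / 2 by rw [h]; ring), trivial⟩
  · exact absurd (show q.1.1 ≤ p.1.1 by rw [h]; exact p.1.2) h2

theorem midRep_zero_left (k : ℕ) (p q : StarRep k) (h : p.1.1 = 0) :
    starRel k (midRep k p q)
      (⟨q.1.1 / 2, div_nonneg q.1.2 (by norm_num)⟩, q.2) := by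
  unfold midRep
  split_ifs with h1 h2
  · left
    simp only [Prod.mk.injEq]
    exact ⟨Subtype.ext (show (p.1.1 + q.1.1) / 2 = q.1.1 / 2 by rw [h]; ring), h1⟩
  · right
    have hq : q.1.1 = 0 := le_antisymm (by rw [h] at h2; exact h2) q.1.2
    constructor
    · show (p.1.1 - q.1.1) / 2 = 0
      rw [h, hq]; ring
    · show q.1.1 / 2 = 0
      rw [hq]; ring
  · left
    simp only [Prod.mk.injEq]
    exact ⟨Subtype.ext (show (q.1.1 - p.1.1) / 2 = q.1.1 / 2 by rw [h]; ring), trivial⟩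

/-- The midpoint operation on `𝕋`. -/
noncomputable def starMid (k : ℕ) : TStar k → TStar k → TStar k :=
  Quotient.map₂ (midRep k) (by
    rintro p p' (rfl | ⟨hp, hp'⟩) q q' (rfl | ⟨hq, hq'⟩)
    · exact (starSetoid k).refl _
    · rw [midRep_zero_right k p q hq, midRep_zero_right k p q' hq']
      try exact (starSetoid k).refl _
    · exact (starSetoid k).trans (midRep_zero_left k p q hp)
        ((starSetoid k).symm (midRep_zero_left k p' q hp'))
    · rw [midRep_zero_right k p q hq, midRep_zero_right k p' q' hq']
      right
      constructor
      · show p.1.1 / 2 = 0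
        rw [hp]; ring
      · show p'.1.1 / 2 = 0
        rw [hp']; ring)

/-- The componentwise midpoint on `𝕋 × ℝ`. -/
noncomputable def gridMid (k : ℕ) (u v : TStar k × ℝ) : TStar k × ℝ :=
  (starMid k u.1 v.1, (u.2 + v.2) / 2)

/-- `π((x,y),(x',y')) := dist(x,x') − y − y'`. -/
noncomputable def piFun (k : ℕ) (u v : TStar k × ℝ) : ℝ :=
  starDist k u.1 v.1 - u.2 - v.2

theorem midRep_cases (k : ℕ) (p q : StarRep k) :
    (p.2 = q.2 ∧ (midRep k p q).1.1 = (p.1.1 + q.1.1) / 2 ∧ (midRep k p q).2 = p.2) ∨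
    (¬ p.2 = q.2 ∧ q.1.1 ≤ p.1.1 ∧ (midRep k p q).1.1 = (p.1.1 - q.1.1) / 2 ∧
      (midRep k p q).2 = p.2) ∨
    (¬ p.2 = q.2 ∧ p.1.1 ≤ q.1.1 ∧ (midRep k p q).1.1 = (q.1.1 - p.1.1) / 2 ∧
      (midRep k p q).2 = q.2) := by
  unfold midRep
  split_ifs with h1 h2
  · exact Or.inl ⟨h1, rfl, rfl⟩
  · exact Or.inr (Or.inl ⟨h1, h2, rfl, rfl⟩)
  · exact Or.inr (Or.inr ⟨h1, le_of_not_ge h2, rfl, rfl⟩)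

set_option maxHeartbeats 2000000 in
theorem treeMid (k : ℕ) (p q p' q' : StarRep k) :
    2 * starDistFun k (midRep k p q) (midRep k p' q') ≤
      starDistFun k p p' + starDistFun k q q' := by
  have h1 := p.1.2
  have h2 := q.1.2
  have h3 := p'.1.2
  have h4 := q'.1.2
  unfold starDistFun
  rcases midRep_cases k p q with ⟨hb, hr, hs⟩ | ⟨hb, hle, hr, hs⟩ | ⟨hb, hle, hr, hs⟩ <;>
    rcases midRep_cases k p' q' with ⟨hb', hr', hs'⟩ | ⟨hb', hle', hr', hs'⟩ |
      ⟨hb', hle', hr', hs'⟩ <;>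
    rw [hs, hs', hr, hr'] <;>
    split_ifs <;>
    first
      | linarith
      | (simp only [abs_eq_max_neg, max_def]; split_ifs <;>
          first | linarith | (exfalso; simp_all))
      | (exfalso; simp_all)

theorem signDist (k : ℕ) (p q : StarRep k) :
    ∃ ε₁ ε₂ : ℝ, (ε₁ = 1 ∨ ε₁ = -1) ∧ (ε₂ = 1 ∨ ε₂ = -1) ∧
      starDistFun k p q = ε₁ * p.1.1 + ε₂ * q.1.1 := by
  unfold starDistFun
  split_ifs with h
  · rcases le_total p.1.1 q.1.1 with h' | h'
    · exact ⟨-1, 1, Or.inr rfl, Or.inl rfl, by rw [abs_of_nonpos (by linarith)]; ring⟩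
    · exact ⟨1, -1, Or.inl rfl, Or.inr rfl, by rw [abs_of_nonneg (by linarith)]; ring⟩
  · exact ⟨1, 1, Or.inl rfl, Or.inl rfl, by ring⟩

theorem signMid (k : ℕ) (p q : StarRep k) :
    ∃ ε₁ ε₂ : ℝ, (ε₁ = 1 ∨ ε₁ = -1) ∧ (ε₂ = 1 ∨ ε₂ = -1) ∧
      (midRep k p q).1.1 = (ε₁ * p.1.1 + ε₂ * q.1.1) / 2 := by
  unfold midRep
  split_ifs with h1 h2
  · exact ⟨1, 1, Or.inl rfl, Or.inl rfl, by ring⟩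
  · exact ⟨1, -1, Or.inl rfl, Or.inr rfl, by ring⟩
  · exact ⟨-1, 1, Or.inr rfl, Or.inl rfl, by ring⟩

theorem grid_sign (k : ℕ) (x : TStar k) (y σ : ℝ) (h : (x, y) ∈ StarGrid k)
    (hσ : σ = 1 ∨ σ = -1) : ∃ a : ℤ, σ * starRad k x - y = a := by
  rcases h with ⟨⟨m, hm⟩, ⟨n, hn⟩⟩ | ⟨⟨m, hm⟩, ⟨n, hn⟩⟩ <;> rcases hσ with rfl | rfl <;>
    simp only at hm hn
  · exact ⟨m - n, by push_cast; rw [hm, hn]; ring⟩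
  · exact ⟨-m - n, by push_cast; rw [hm, hn]; ring⟩
  · exact ⟨m - n, by push_cast; rw [hm, hn]; ring⟩
  · exact ⟨-m - n - 1, by push_cast; rw [hm, hn]; ring⟩

/-- **Integrality and midpoint convexity of `π` on `𝔾`** (Hirai–Mizutani):
for points of the grid `𝔾`, (1) `π(u,v) ∈ ℤ`; (2) `π` at midpoints is half-integral
and satisfies `π(u,v) + π(u',v') ≥ 2·π((u+u')/2, (v+v')/2)`. -/
theorem piFun_integral_and_midpoint_convex
    (k : ℕ) (hk : 1 ≤ k) (u v u' v' : TStar k × ℝ)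
    (hu : u ∈ StarGrid k) (hv : v ∈ StarGrid k)
    (hu' : u' ∈ StarGrid k) (hv' : v' ∈ StarGrid k) :
    (∃ z : ℤ, piFun k u v = (z : ℝ)) ∧
    (∃ z : ℤ, piFun k (gridMid k u u') (gridMid k v v') = (z : ℝ) / 2) ∧
    2 * piFun k (gridMid k u u') (gridMid k v v') ≤ piFun k u v + piFun k u' v' := by
  obtain ⟨xu, yu⟩ := u
  obtain ⟨xv, yv⟩ := v
  obtain ⟨xu', yu'⟩ := u'
  obtain ⟨xv', yv'⟩ := v'
  obtain ⟨p, rfl⟩ := Quot.exists_rep xu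
  obtain ⟨q, rfl⟩ := Quot.exists_rep xv
  obtain ⟨p', rfl⟩ := Quot.exists_rep xu'
  obtain ⟨q', rfl⟩ := Quot.exists_rep xv'
  have rad_mk : ∀ r : StarRep k, starRad k (Quot.mk _ r) = r.1.1 := fun _ => rfl
  have dist_mk : ∀ r r' : StarRep k,
      starDist k (Quot.mk _ r) (Quot.mk _ r') = starDistFun k r r' := fun _ _ => rfl
  have mid_mk : ∀ r r' : StarRep k,
      starMid k (Quot.mk _ r) (Quot.mk _ r') = Quot.mk _ (midRep k r r') := fun _ _ => rfl
  have e1 : piFun k (Quot.mk _ p, yu) (Quot.mk _ q, yv) = starDistFun k p q - yu - yv := rfl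
  have e2 : piFun k (Quot.mk _ p', yu') (Quot.mk _ q', yv') =
      starDistFun k p' q' - yu' - yv' := rfl
  have e3 : piFun k (gridMid k (Quot.mk _ p, yu) (Quot.mk _ p', yu'))
        (gridMid k (Quot.mk _ q, yv) (Quot.mk _ q', yv')) =
      starDistFun k (midRep k p p') (midRep k q q') - (yu + yu') / 2 - (yv + yv') / 2 := rfl
  refine ⟨?_, ?_, ?_⟩
  · obtain ⟨ε₁, ε₂, hε₁, hε₂, hd⟩ := signDist k p q
    obtain ⟨a, ha⟩ := grid_sign k _ yu ε₁ hu hε₁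
    obtain ⟨b, hb⟩ := grid_sign k _ yv ε₂ hv hε₂
    rw [rad_mk] at ha hb
    exact ⟨a + b, by rw [e1]; push_cast; linear_combination hd + ha + hb⟩
  · obtain ⟨δ₁, δ₂, hδ₁, hδ₂, hD⟩ := signDist k (midRep k p p') (midRep k q q')
    obtain ⟨α₁, α₂, hα₁, hα₂, hm1⟩ := signMid k p p'
    obtain ⟨β₁, β₂, hβ₁, hβ₂, hm2⟩ := signMid k q q'
    have s1 : δ₁ * α₁ = 1 ∨ δ₁ * α₁ = -1 := by
      rcases hδ₁ with rfl | rfl <;> rcases hα₁ with rfl | rfl <;> norm_num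
    have s2 : δ₁ * α₂ = 1 ∨ δ₁ * α₂ = -1 := by
      rcases hδ₁ with rfl | rfl <;> rcases hα₂ with rfl | rfl <;> norm_num
    have s3 : δ₂ * β₁ = 1 ∨ δ₂ * β₁ = -1 := by
      rcases hδ₂ with rfl | rfl <;> rcases hβ₁ with rfl | rfl <;> norm_num
    have s4 : δ₂ * β₂ = 1 ∨ δ₂ * β₂ = -1 := by
      rcases hδ₂ with rfl | rfl <;> rcases hβ₂ with rfl | rfl <;> norm_num
    obtain ⟨a1, ha1⟩ := grid_sign k _ yu _ hu s1
    obtain ⟨a2, ha2⟩ := grid_sign k _ yu' _ hu' s2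
    obtain ⟨a3, ha3⟩ := grid_sign k _ yv _ hv s3
    obtain ⟨a4, ha4⟩ := grid_sign k _ yv' _ hv' s4
    rw [rad_mk] at ha1 ha2 ha3 ha4
    refine ⟨a1 + a2 + a3 + a4, ?_⟩
    rw [hm1, hm2] at hD
    rw [e3]
    push_cast
    linear_combination hD + ha1 / 2 + ha2 / 2 + ha3 / 2 + ha4 / 2
  · rw [e1, e2, e3]
    have := treeMid k p p' q q'
    linarith
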